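/- Let $(T_k)_{k\in\mathbb{Z}}$ be bounded operators on a Hilbert space $H$ satisfying $\|T_{k'}^* T_k\| + \|T_{k'} T_k^*\| \le C\, 2^{-\epsilon|k-k'|}$ for some $\epsilon>0$ and all $k,k'$. Then for every finite subset $F\subset\mathbb{Z}$, $\|\sum_{k\in F} T_k\| \le C' $ with $C'$ depending only on $C$ and $\epsilon$ (Cotlar–Stein almost orthogonality). -/

import Mathlib

open scoped ENNReal

open Finset

namespace CotlarSteinAux

variable {H : Type} [NormedAddCommGroup H] [InnerProductSpace ℂ H] [CompleteSpace H]

noncomputable def wgt (C ε : ℝ) (a b : ℤ) : ℝ :=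
  Real.sqrt C * ((2:ℝ) ^ (-(ε/2)) : ℝ) ^ (a - b).natAbs

lemma wgt_nonneg (C ε : ℝ) (a b : ℤ) : 0 ≤ wgt C ε a b := by
  unfold wgt; positivity

lemma wgt_sq (C ε : ℝ) (hC : 0 ≤ C) (a b : ℤ) :
    wgt C ε a b ^ 2 = C * (2:ℝ) ^ (-(ε * |(a:ℝ) - (b:ℝ)|)) := by
  have habs : |(a:ℝ) - (b:ℝ)| = ((a - b).natAbs : ℝ) := by
    rw [Nat.cast_natAbs]; push_cast; ring
  rw [wgt, mul_pow, Real.sq_sqrt hC, ← pow_mul, habs]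
  congr 1
  rw [← Real.rpow_natCast ((2:ℝ) ^ (-(ε/2))) ((a-b).natAbs * 2), ← Real.rpow_mul (by norm_num)]
  congr 1
  push_cast
  ring

noncomputable def op (T : ℤ → H →L[ℂ] H) (k : ℕ → ℤ) (i : ℕ) : H →L[ℂ] H :=
  if i % 2 = 0 then star (T (k i)) else T (k i)

noncomputable def chain (T : ℤ → H →L[ℂ] H) (k : ℕ → ℤ) (a : ℕ) : ℕ → (H →L[ℂ] H)
  | 0 => 1
  | t+1 => chain T k a t * op T k (a+t)

noncomputable def bigOp (T : ℤ → H →L[ℂ] H) (F : Finset ℤ) (i : ℕ) : H →L[ℂ] H :=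
  if i % 2 = 0 then star (∑ x ∈ F, T x) else ∑ x ∈ F, T x

noncomputable def bigProd (T : ℤ → H →L[ℂ] H) (F : Finset ℤ) (a : ℕ) : ℕ → (H →L[ℂ] H)
  | 0 => 1
  | t+1 => bigOp T F a * bigProd T F (a+1) t

lemma chain_split (T : ℤ → H →L[ℂ] H) (k : ℕ → ℤ) (a s : ℕ) :
    ∀ u, chain T k a (s + u) = chain T k a s * chain T k (a + s) u := by
  intro u
  induction u with
  | zero => simp [chain]
  | succ u ih =>
      show chain T k a (s + u + 1) = _
      rw [chain, ih, chain, mul_assoc, Nat.add_assoc]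

lemma chain_congr (T : ℤ → H →L[ℂ] H) (k k' : ℕ → ℤ) (a : ℕ) :
    ∀ t, (∀ i, i < a + t → k i = k' i) → chain T k a t = chain T k' a t := by
  intro t
  induction t with
  | zero => intro _; rfl
  | succ t ih =>
      intro h
      rw [chain, chain, ih (fun i hi => h i (by omega)), op, op, h (a+t) (by omega)]

end CotlarSteinAux

namespace CotlarSteinAux

variable {H : Type} [NormedAddCommGroup H] [InnerProductSpace ℂ H] [CompleteSpace H]

variable {C ε : ℝ} {T : ℤ → H →L[ℂ] H}

def Hyp (C ε : ℝ) (T : ℤ → H →L[ℂ] H) : Prop :=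
  ∀ k k' : ℤ,
    ‖ContinuousLinearMap.adjoint (T k') ∘L T k‖ +
      ‖T k' ∘L ContinuousLinearMap.adjoint (T k)‖ ≤
    C * 2 ^ (-(ε * |(k : ℝ) - (k' : ℝ)|))

lemma hyp1 (hT : Hyp C ε T) (hC : 0 ≤ C) (a b : ℤ) :
    ‖star (T a) * T b‖ ≤ wgt C ε a b ^ 2 := by
  have h := hT b a
  rw [ContinuousLinearMap.star_eq_adjoint, ContinuousLinearMap.mul_def]
  calc ‖(ContinuousLinearMap.adjoint (T a)).comp (T b)‖
      ≤ _ := le_add_of_nonneg_right (norm_nonneg _)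
    _ ≤ C * 2 ^ (-(ε * |(b:ℝ) - (a:ℝ)|)) := h
    _ = wgt C ε a b ^ 2 := by rw [wgt_sq C ε hC a b, abs_sub_comm]

lemma hyp2 (hT : Hyp C ε T) (hC : 0 ≤ C) (a b : ℤ) :
    ‖T a * star (T b)‖ ≤ wgt C ε a b ^ 2 := by
  have h := hT b a
  rw [ContinuousLinearMap.star_eq_adjoint, ContinuousLinearMap.mul_def]
  calc ‖(T a).comp (ContinuousLinearMap.adjoint (T b))‖
      ≤ _ := le_add_of_nonneg_left (norm_nonneg _)
    _ ≤ C * 2 ^ (-(ε * |(b:ℝ) - (a:ℝ)|)) := h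
    _ = wgt C ε a b ^ 2 := by rw [wgt_sq C ε hC a b, abs_sub_comm]

lemma norm_T_le (hT : Hyp C ε T) (hC : 0 ≤ C) (x : ℤ) : ‖T x‖ ≤ Real.sqrt C := by
  have h1 : ‖star (T x) * T x‖ ≤ wgt C ε x x ^ 2 := hyp1 hT hC x x
  rw [CStarRing.norm_star_mul_self] at h1
  have hw : wgt C ε x x ^ 2 = C := by
    rw [wgt_sq C ε hC]; simp
  rw [hw] at h1
  have : ‖T x‖ ^ 2 ≤ Real.sqrt C ^ 2 := by
    rw [Real.sq_sqrt hC]; nlinarith [norm_nonneg (T x)]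
  have h2 := Real.sqrt_le_sqrt this
  rwa [Real.sqrt_sq (norm_nonneg _), Real.sqrt_sq (Real.sqrt_nonneg _)] at h2

lemma norm_op_le (hT : Hyp C ε T) (hC : 0 ≤ C) (k : ℕ → ℤ) (i : ℕ) :
    ‖op T k i‖ ≤ Real.sqrt C := by
  rw [op]
  split
  · rw [norm_star]; exact norm_T_le hT hC _
  · exact norm_T_le hT hC _

lemma pair_norm (hT : Hyp C ε T) (hC : 0 ≤ C) (k : ℕ → ℤ) (i : ℕ) :
    ‖op T k i * op T k (i+1)‖ ≤ wgt C ε (k i) (k (i+1)) ^ 2 := by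
  rcases Nat.even_or_odd i with he | ho
  · have h0 : i % 2 = 0 := Nat.even_iff.mp he
    have h1 : (i+1) % 2 = 1 := by omega
    rw [op, op, h0, h1]
    simp only [if_pos rfl]
    norm_num
    exact hyp1 hT hC _ _
  · have h0 : i % 2 = 1 := Nat.odd_iff.mp ho
    have h1 : (i+1) % 2 = 0 := by omega
    rw [op, op, h0, h1]
    norm_num
    exact hyp2 hT hC _ _

end CotlarSteinAux

namespace CotlarSteinAux

variable {H : Type} [NormedAddCommGroup H] [InnerProductSpace ℂ H] [CompleteSpace H]
variable {C ε : ℝ} {T : ℤ → H →L[ℂ] H}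

lemma chain_one (T : ℤ → H →L[ℂ] H) (k : ℕ → ℤ) (a : ℕ) : chain T k a 1 = op T k a := by
  rw [chain, chain, one_mul, Nat.add_zero]

lemma chain_two (T : ℤ → H →L[ℂ] H) (k : ℕ → ℤ) (a : ℕ) :
    chain T k a 2 = op T k a * op T k (a+1) := by
  rw [chain, chain_one]

lemma paired_bound (hT : Hyp C ε T) (hC : 0 ≤ C) (k : ℕ → ℤ) :
    ∀ t a, ‖chain T k a (2*t)‖ ≤ ∏ i ∈ Finset.range t, wgt C ε (k (a+2*i)) (k (a+2*i+1)) ^ 2 := by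
  intro t
  induction t with
  | zero => intro a; simp [chain]; exact ContinuousLinearMap.norm_id_le
  | succ t ih =>
      intro a
      have hsplit : chain T k a (2*(t+1)) = chain T k a (2*t) * chain T k (a+2*t) 2 := by
        rw [show 2*(t+1) = 2*t + 2 by ring, chain_split]
      rw [hsplit, Finset.prod_range_succ]
      refine le_trans (norm_mul_le _ _) ?_
      have h2 : ‖chain T k (a+2*t) 2‖ ≤ wgt C ε (k (a+2*t)) (k (a+2*t+1)) ^ 2 := by
        rw [chain_two]; exact pair_norm hT hC k _
      exact mul_le_mul (ih a) h2 (norm_nonneg _)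
        (Finset.prod_nonneg fun i _ => sq_nonneg _)

lemma interleave_even (f : ℕ → ℝ) :
    ∀ t, ∏ i ∈ Finset.range (2*t), f i
      = (∏ i ∈ Finset.range t, f (2*i)) * (∏ i ∈ Finset.range t, f (2*i+1)) := by
  intro t
  induction t with
  | zero => simp
  | succ t ih =>
      rw [show 2*(t+1) = (2*t+1)+1 by ring, Finset.prod_range_succ, Finset.prod_range_succ,
        ih, Finset.prod_range_succ, Finset.prod_range_succ]
      ring

lemma interleave_odd (f : ℕ → ℝ) :
    ∀ t, ∏ i ∈ Finset.range (2*t+1), f i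
      = (∏ i ∈ Finset.range (t+1), f (2*i)) * (∏ i ∈ Finset.range t, f (2*i+1)) := by
  intro t
  induction t with
  | zero => simp
  | succ t ih =>
      rw [show 2*(t+1)+1 = ((2*t+1)+1)+1 by ring, Finset.prod_range_succ, Finset.prod_range_succ,
        ih, Finset.prod_range_succ (fun i => f (2*i)) (t+1), Finset.prod_range_succ (fun i => f (2*i)) t, Finset.prod_range_succ (fun i => f (2*i+1)) t,
        show 2*(t+1) = 2*t+2 from by ring]
      ring

end CotlarSteinAux

namespace CotlarSteinAux

variable {H : Type} [NormedAddCommGroup H] [InnerProductSpace ℂ H] [CompleteSpace H]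
variable {C ε : ℝ} {T : ℤ → H →L[ℂ] H}

lemma chain_norm (hT : Hyp C ε T) (hC : 0 ≤ C) (k : ℕ → ℤ) (m : ℕ) :
    ‖chain T k 0 (m+1)‖ ≤ Real.sqrt C * ∏ i ∈ Finset.range m, wgt C ε (k i) (k (i+1)) := by
  set A := Real.sqrt C with hA
  set g : ℕ → ℝ := fun i => wgt C ε (k i) (k (i+1)) ^ 2 with hg
  have hA0 : 0 ≤ A := Real.sqrt_nonneg _
  have hg0 : ∀ i, 0 ≤ g i := fun i => sq_nonneg _
  have hB0 : 0 ≤ A * ∏ i ∈ Finset.range m, wgt C ε (k i) (k (i+1)) := by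
    apply mul_nonneg hA0 (Finset.prod_nonneg fun i _ => wgt_nonneg _ _ _ _)
  have key : ‖chain T k 0 (m+1)‖ ^ 2 ≤ A ^ 2 * ∏ i ∈ Finset.range m, g i := by
    have hpb : ∀ t a, ‖chain T k a (2*t)‖
        ≤ ∏ i ∈ Finset.range t, wgt C ε (k (a+2*i)) (k (a+2*i+1)) ^ 2 :=
      paired_bound hT hC k
    have hone : ∀ a, ‖chain T k a 1‖ ≤ A := fun a => by
      rw [chain_one]; exact norm_op_le hT hC k a
    have hprod1 : ∀ s, (∏ i ∈ Finset.range s, wgt C ε (k (0+2*i)) (k (0+2*i+1)) ^ 2)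
        = ∏ i ∈ Finset.range s, g (2*i) := by
      intro s; exact Finset.prod_congr rfl fun i _ => by simp [hg]
    have hprod2 : ∀ s, (∏ i ∈ Finset.range s, wgt C ε (k (1+2*i)) (k (1+2*i+1)) ^ 2)
        = ∏ i ∈ Finset.range s, g (2*i+1) := by
      intro s
      exact Finset.prod_congr rfl fun i _ => by
        rw [show 1+2*i = 2*i+1 from by ring, hg]
    have hprodnn : ∀ (s : ℕ) (h : ℕ → ℝ), (∀ i, 0 ≤ h i) → 0 ≤ ∏ i ∈ Finset.range s, h i :=
      fun s h hh => Finset.prod_nonneg fun i _ => hh i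
    rcases Nat.even_or_odd m with hme | hmo
    · -- m = 2*t, m+1 = 2*t+1 odd length
      obtain ⟨t, ht⟩ := hme
      have hm : m = 2*t := by omega
      subst hm
      have G1 : ‖chain T k 0 (2*t+1)‖ ≤ (∏ i ∈ Finset.range t, g (2*i)) * A := by
        have h1 : chain T k 0 (2*t+1) = chain T k 0 (2*t) * chain T k (0+2*t) 1 :=
          chain_split T k 0 (2*t) 1
        rw [h1]
        refine le_trans (norm_mul_le _ _) ?_
        exact mul_le_mul (le_of_le_of_eq (hpb t 0) (hprod1 t)) (hone _)
          (norm_nonneg _) (hprodnn t _ fun i => hg0 _)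
      have G2 : ‖chain T k 0 (2*t+1)‖ ≤ A * ∏ i ∈ Finset.range t, g (2*i+1) := by
        have h1 : chain T k 0 (1+2*t) = chain T k 0 1 * chain T k (0+1) (2*t) :=
          chain_split T k 0 1 (2*t)
        rw [show 2*t+1 = 1+2*t from by ring, h1]
        refine le_trans (norm_mul_le _ _) ?_
        exact mul_le_mul (hone 0) (le_of_le_of_eq (hpb t 1) (hprod2 t))
          (norm_nonneg _) hA0
      calc ‖chain T k 0 (2*t+1)‖ ^ 2 = ‖chain T k 0 (2*t+1)‖ * ‖chain T k 0 (2*t+1)‖ := sq _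
        _ ≤ ((∏ i ∈ Finset.range t, g (2*i)) * A) * (A * ∏ i ∈ Finset.range t, g (2*i+1)) := by
            apply mul_le_mul G1 G2 (norm_nonneg _)
            exact mul_nonneg (hprodnn t _ fun i => hg0 _) hA0
        _ = A ^ 2 * ∏ i ∈ Finset.range (2*t), g i := by
            rw [interleave_even g t]; ring
    · -- m odd: m = 2*s+1, m+1 = 2*s+2
      obtain ⟨s, hs⟩ := hmo
      subst hs
      have G1 : ‖chain T k 0 (2*s+1+1)‖ ≤ ∏ i ∈ Finset.range (s+1), g (2*i) := by
        have := le_of_le_of_eq (hpb (s+1) 0) (hprod1 (s+1))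
        rwa [show 2*(s+1) = 2*s+1+1 from by ring] at this
      have G2 : ‖chain T k 0 (2*s+1+1)‖ ≤ (A * ∏ i ∈ Finset.range s, g (2*i+1)) * A := by
        have h1 : chain T k 0 (1+(2*s+1)) = chain T k 0 1 * chain T k (0+1) (2*s+1) :=
          chain_split T k 0 1 (2*s+1)
        have h2 : chain T k 1 (2*s+1) = chain T k 1 (2*s) * chain T k (1+2*s) 1 :=
          chain_split T k 1 (2*s) 1
        rw [show 2*s+1+1 = 1+(2*s+1) from by ring, h1]
        simp only [Nat.zero_add] at h2 ⊢
        rw [h2, ← mul_assoc]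
        refine le_trans (norm_mul_le _ _) ?_
        refine mul_le_mul ?_ (hone _) (norm_nonneg _)
          (mul_nonneg hA0 (hprodnn s _ fun i => hg0 _))
        refine le_trans (norm_mul_le _ _) ?_
        exact mul_le_mul (hone 0) (le_of_le_of_eq (hpb s 1) (hprod2 s))
          (norm_nonneg _) hA0
      calc ‖chain T k 0 (2*s+1+1)‖ ^ 2
          = ‖chain T k 0 (2*s+1+1)‖ * ‖chain T k 0 (2*s+1+1)‖ := sq _
        _ ≤ (∏ i ∈ Finset.range (s+1), g (2*i)) * ((A * ∏ i ∈ Finset.range s, g (2*i+1)) * A) := by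
            apply mul_le_mul G1 G2 (norm_nonneg _) (hprodnn (s+1) _ fun i => hg0 _)
        _ = A ^ 2 * ∏ i ∈ Finset.range (2*s+1), g i := by
            rw [interleave_odd g s]; ring
  -- conclude from squares
  have hsq : (A * ∏ i ∈ Finset.range m, wgt C ε (k i) (k (i+1))) ^ 2
      = A ^ 2 * ∏ i ∈ Finset.range m, g i := by
    rw [mul_pow, ← Finset.prod_pow]
  have h2 := Real.sqrt_le_sqrt (le_of_le_of_eq key hsq.symm)
  rwa [Real.sqrt_sq (norm_nonneg _), Real.sqrt_sq hB0] at h2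

end CotlarSteinAux

namespace CotlarSteinAux

variable {H : Type} [NormedAddCommGroup H] [InnerProductSpace ℂ H] [CompleteSpace H]
variable {C ε : ℝ} {T : ℤ → H →L[ℂ] H}

lemma geom_finset_sum {r : ℝ} (hr0 : 0 ≤ r) (hr1 : r < 1) (G : Finset ℕ) :
    ∑ n ∈ G, r ^ n ≤ (1 - r)⁻¹ := by
  refine le_trans (Summable.sum_le_tsum G (fun i _ => pow_nonneg hr0 i)
    (summable_geometric_of_lt_one hr0 hr1)) ?_
  rw [tsum_geometric_of_lt_one hr0 hr1]

lemma line_sum (hC : 0 ≤ C) (hε : 0 < ε) (F : Finset ℤ) (x : ℤ) :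
    ∑ y ∈ F, wgt C ε x y ≤ Real.sqrt C * (2 * (1 - (2:ℝ) ^ (-(ε/2)))⁻¹) := by
  set r : ℝ := (2:ℝ) ^ (-(ε/2)) with hr
  have hr0 : 0 ≤ r := Real.rpow_nonneg (by norm_num) _
  have hr1 : r < 1 := Real.rpow_lt_one_of_one_lt_of_neg (by norm_num) (by linarith)
  have key : ∑ y ∈ F, r ^ (x - y).natAbs ≤ 2 * (1 - r)⁻¹ := by
    rw [← Finset.sum_filter_add_sum_filter_not F (fun y => x ≤ y)]
    have h1 : ∑ y ∈ F.filter (fun y => x ≤ y), r ^ (x - y).natAbs ≤ (1 - r)⁻¹ := by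
      rw [← Finset.sum_image (f := fun n => r ^ n)
        (g := fun y : ℤ => (x - y).natAbs)
        (by intro a ha b hb hab
            simp only [Finset.mem_coe, Finset.mem_filter] at ha hb
            have hab' : (x - a).natAbs = (x - b).natAbs := hab
            omega)]
      exact geom_finset_sum hr0 hr1 _
    have h2 : ∑ y ∈ F.filter (fun y => ¬ x ≤ y), r ^ (x - y).natAbs ≤ (1 - r)⁻¹ := by
      rw [← Finset.sum_image (f := fun n => r ^ n)
        (g := fun y : ℤ => (x - y).natAbs)
        (by intro a ha b hb hab
            simp only [Finset.mem_coe, Finset.mem_filter] at ha hb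
            have hab' : (x - a).natAbs = (x - b).natAbs := hab
            omega)]
      exact geom_finset_sum hr0 hr1 _
    linarith
  calc ∑ y ∈ F, wgt C ε x y = Real.sqrt C * ∑ y ∈ F, r ^ (x - y).natAbs := by
        rw [Finset.mul_sum]; exact Finset.sum_congr rfl fun y _ => rfl
    _ ≤ Real.sqrt C * (2 * (1 - r)⁻¹) :=
        mul_le_mul_of_nonneg_left key (Real.sqrt_nonneg _)

lemma main_bound (hT : Hyp C ε T) (hC : 0 ≤ C) (F : Finset ℤ) (E : ℝ) (hE0 : 0 ≤ E)
    (hE : ∀ x : ℤ, ∑ y ∈ F, wgt C ε x y ≤ E) :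
    ∀ (t j : ℕ) (k : ℕ → ℤ), ‖chain T k 0 (j+1) * bigProd T F (j+1) t‖
      ≤ (Real.sqrt C * ∏ i ∈ Finset.range j, wgt C ε (k i) (k (i+1))) * E ^ t := by
  intro t
  induction t with
  | zero =>
      intro j k
      rw [bigProd, mul_one, pow_zero, mul_one]
      exact chain_norm hT hC k j
  | succ t ih =>
      intro j k
      set A := Real.sqrt C with hA
      have hA0 : 0 ≤ A := Real.sqrt_nonneg _
      have hprod0 : 0 ≤ ∏ i ∈ Finset.range j, wgt C ε (k i) (k (i+1)) :=
        Finset.prod_nonneg fun i _ => wgt_nonneg _ _ _ _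
      have hbig : bigOp T F (j+1) = ∑ y ∈ F, (if (j+1) % 2 = 0 then star (T y) else T y) := by
        rw [bigOp]
        split_ifs with h
        · rw [star_sum]
        · rfl
      have hexp : chain T k 0 (j+1) * bigProd T F (j+1) (t+1)
          = ∑ y ∈ F, chain T (Function.update k (j+1) y) 0 (j+1+1)
              * bigProd T F (j+1+1) t := by
        rw [bigProd, hbig, Finset.sum_mul, Finset.mul_sum]
        refine Finset.sum_congr rfl fun y _ => ?_
        have hcc : chain T (Function.update k (j+1) y) 0 (j+1+1)
            = chain T k 0 (j+1) * (if (j+1) % 2 = 0 then star (T y) else T y) := by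
          rw [chain]
          congr 1
          · exact chain_congr T _ k 0 (j+1)
              (fun i hi => Function.update_of_ne (by omega) y k)
          · rw [op, Nat.zero_add, Function.update_self]
        rw [hcc, mul_assoc]
      rw [hexp]
      refine le_trans (norm_sum_le _ _) ?_
      have hterm : ∀ y ∈ F,
          ‖chain T (Function.update k (j+1) y) 0 (j+1+1) * bigProd T F (j+1+1) t‖
          ≤ ((A * ∏ i ∈ Finset.range j, wgt C ε (k i) (k (i+1))) * E ^ t) * wgt C ε (k j) y := by
        intro y _
        refine le_trans (ih (j+1) (Function.update k (j+1) y)) ?_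
        have hpr : ∏ i ∈ Finset.range (j+1),
            wgt C ε (Function.update k (j+1) y i) (Function.update k (j+1) y (i+1))
            = (∏ i ∈ Finset.range j, wgt C ε (k i) (k (i+1))) * wgt C ε (k j) y := by
          rw [Finset.prod_range_succ]
          congr 1
          · refine Finset.prod_congr rfl fun i hi => ?_
            rw [Finset.mem_range] at hi
            rw [Function.update_of_ne (by omega), Function.update_of_ne (by omega)]
          · rw [Function.update_of_ne (by omega), Function.update_self]
        rw [hpr]
        apply le_of_eq
        ring
      refine le_trans (Finset.sum_le_sum hterm) ?_
      have hfact : ∑ y ∈ F, ((A * ∏ i ∈ Finset.range j, wgt C ε (k i) (k (i+1))) * E ^ t)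
            * wgt C ε (k j) y
          = ((A * ∏ i ∈ Finset.range j, wgt C ε (k i) (k (i+1))) * E ^ t)
            * ∑ y ∈ F, wgt C ε (k j) y := by
        rw [Finset.mul_sum]
      rw [hfact]
      have hc0 : 0 ≤ (A * ∏ i ∈ Finset.range j, wgt C ε (k i) (k (i+1))) * E ^ t :=
        mul_nonneg (mul_nonneg hA0 hprod0) (pow_nonneg hE0 t)
      calc ((A * ∏ i ∈ Finset.range j, wgt C ε (k i) (k (i+1))) * E ^ t)
            * ∑ y ∈ F, wgt C ε (k j) y
          ≤ ((A * ∏ i ∈ Finset.range j, wgt C ε (k i) (k (i+1))) * E ^ t) * E :=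
            mul_le_mul_of_nonneg_left (hE (k j)) hc0
        _ = (A * ∏ i ∈ Finset.range j, wgt C ε (k i) (k (i+1))) * E ^ (t+1) := by ring

end CotlarSteinAux

namespace CotlarSteinAux

variable {H : Type} [NormedAddCommGroup H] [InnerProductSpace ℂ H] [CompleteSpace H]
variable {C ε : ℝ} {T : ℤ → H →L[ℂ] H}

lemma bigProd_shift (T : ℤ → H →L[ℂ] H) (F : Finset ℤ) :
    ∀ t a, bigProd T F (a+2) t = bigProd T F a t := by
  intro t
  induction t with
  | zero => intro a; rfl
  | succ t ih =>
      intro a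
      rw [bigProd, bigProd]
      congr 1
      · rw [bigOp, bigOp, Nat.add_mod_right]
      · exact ih (a+1)

lemma bigProd_eq_pow (T : ℤ → H →L[ℂ] H) (F : Finset ℤ) :
    ∀ N, bigProd T F 0 (2*N) = (star (∑ x ∈ F, T x) * ∑ x ∈ F, T x) ^ N := by
  intro N
  induction N with
  | zero => rfl
  | succ N ih =>
      rw [show 2*(N+1) = (2*N+1)+1 from by ring, bigProd, bigProd,
        show (0:ℕ)+1+1 = 0+2 from rfl, bigProd_shift]
      rw [ih]
      have h0 : bigOp T F 0 = star (∑ x ∈ F, T x) := by rw [bigOp]; norm_num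
      have h1 : bigOp T F 1 = ∑ x ∈ F, T x := by rw [bigOp]; norm_num
      rw [h0, h1, pow_succ' (star (∑ x ∈ F, T x) * ∑ x ∈ F, T x) N, mul_assoc]

lemma norm_pow_two_pow (S : H →L[ℂ] H) :
    ∀ m : ℕ, ‖(star S * S) ^ (2^m)‖ = ‖S‖ ^ (2^(m+1)) := by
  intro m
  induction m with
  | zero =>
      rw [pow_zero, pow_one, CStarRing.norm_star_mul_self]
      norm_num
      ring
  | succ m ih =>
      have hb : (star S * S) ^ (2^(m+1)) = ((star S * S) ^ (2^m)) ^ 2 := by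
        rw [← pow_mul, pow_succ]
      have hstar : star ((star S * S) ^ (2^m)) = (star S * S) ^ (2^m) := by
        rw [star_pow, star_mul, star_star]
      have : ‖(star S * S) ^ (2^(m+1))‖ = ‖(star S * S) ^ (2^m)‖ * ‖(star S * S) ^ (2^m)‖ := by
        rw [hb, sq]
        nth_rewrite 1 [← hstar]
        rw [CStarRing.norm_star_mul_self]
      rw [this, ih, ← pow_add]
      congr 1
      ring

end CotlarSteinAux

open CotlarSteinAux

/-- Cotlar–Stein almost orthogonality: if `‖T_{k'}* T_k‖ + ‖T_{k'} T_k*‖ ≤ C 2^{-ε|k-k'|}`,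
then all finite partial sums `∑_{k ∈ F} T_k` are bounded in operator norm by a constant
depending only on `C` and `ε`. -/
theorem cotlar_stein (C ε : ℝ) (hC : 0 ≤ C) (hε : 0 < ε) :
    ∃ C' : ℝ, 0 ≤ C' ∧
      ∀ (H : Type) [NormedAddCommGroup H] [InnerProductSpace ℂ H] [CompleteSpace H]
        (T : ℤ → H →L[ℂ] H),
        (∀ k k' : ℤ,
            ‖ContinuousLinearMap.adjoint (T k') ∘L T k‖ +
              ‖T k' ∘L ContinuousLinearMap.adjoint (T k)‖ ≤
            C * 2 ^ (-(ε * |(k : ℝ) - (k' : ℝ)|))) →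
        ∀ F : Finset ℤ, ‖∑ k ∈ F, T k‖ ≤ C' := by
  classical
  have hr0 : (0:ℝ) ≤ (2:ℝ) ^ (-(ε/2)) := Real.rpow_nonneg (by norm_num) _
  have hr1 : (2:ℝ) ^ (-(ε/2)) < 1 :=
    Real.rpow_lt_one_of_one_lt_of_neg (by norm_num) (by linarith)
  set E : ℝ := Real.sqrt C * (2 * (1 - (2:ℝ) ^ (-(ε/2)))⁻¹) with hE
  have hE0 : 0 ≤ E := by
    apply mul_nonneg (Real.sqrt_nonneg _)
    have : (0:ℝ) ≤ (1 - (2:ℝ) ^ (-(ε/2)))⁻¹ := inv_nonneg.mpr (by linarith)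
    linarith
  refine ⟨E, hE0, ?_⟩
  intro H _ _ _ T hT F
  have hT' : Hyp C ε T := hT
  have hEline : ∀ x : ℤ, ∑ y ∈ F, wgt C ε x y ≤ E := fun x => line_sum hC hε F x
  set S : H →L[ℂ] H := ∑ k ∈ F, T k with hS
  by_contra hcon
  push_neg at hcon
  have hSpos : 0 < ‖S‖ := lt_of_le_of_lt hE0 hcon
  have bound : ∀ m : ℕ, ‖S‖ ^ (2^(m+1))
      ≤ (F.card : ℝ) * (Real.sqrt C * E ^ (2^(m+1) - 1)) := by
    intro m
    obtain ⟨n, hn⟩ : ∃ n, 2^m = n + 1 :=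
      ⟨2^m - 1, by have := Nat.one_le_two_pow (n := m); omega⟩
    have h1 : ‖S‖^(2^(m+1)) = ‖(star S * S)^(2^m)‖ := (norm_pow_two_pow S m).symm
    have h2 : (star S * S)^(2^m) = bigProd T F 0 (2*(n+1)) := by
      rw [bigProd_eq_pow T F (n+1), hn, hS]
    have h3 : bigProd T F 0 (2*(n+1))
        = ∑ x ∈ F, chain T (fun _ => x) 0 1 * bigProd T F 1 (2*n+1) := by
      rw [show 2*(n+1) = (2*n+1)+1 from by ring, bigProd]
      have h4 : bigOp T F 0 = ∑ x ∈ F, star (T x) := by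
        rw [bigOp]; norm_num
      rw [h4, Finset.sum_mul]
      refine Finset.sum_congr rfl fun x _ => ?_
      congr 1
    have h5 : ∀ x ∈ F, ‖chain T (fun _ => x) 0 1 * bigProd T F 1 (2*n+1)‖
        ≤ Real.sqrt C * E ^ (2*n+1) := by
      intro x _
      have := main_bound hT' hC F E hE0 hEline (2*n+1) 0 (fun _ => x)
      simpa using this
    have h6 : ‖(star S * S)^(2^m)‖ ≤ (F.card : ℝ) * (Real.sqrt C * E ^ (2*n+1)) := by
      rw [h2, h3]
      refine le_trans (norm_sum_le _ _) ?_
      refine le_trans (Finset.sum_le_sum h5) ?_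
      rw [Finset.sum_const, nsmul_eq_mul]
    have hexp : 2*n+1 = 2^(m+1) - 1 := by
      have : 2^(m+1) = 2 * 2^m := by rw [pow_succ]; ring
      omega
    rw [h1]
    rw [hexp] at h6
    exact h6
  rcases eq_or_lt_of_le hE0 with hE00 | hEpos
  · have hb := bound 0
    rw [← hE00] at hb
    norm_num at hb
    simp [hb] at hSpos
  · set q : ℝ := ‖S‖ / E with hq
    have hq1 : 1 < q := (one_lt_div hEpos).mpr hcon
    obtain ⟨n, hn⟩ := pow_unbounded_of_one_lt ((F.card : ℝ) * Real.sqrt C / E) hq1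
    have hle : n ≤ 2^(n+1) :=
      le_of_lt (lt_of_lt_of_le (Nat.lt_two_pow_self)
        (Nat.pow_le_pow_right (by norm_num) (Nat.le_succ n)))
    have h1 : q^n ≤ q^(2^(n+1)) := pow_le_pow_right₀ hq1.le hle
    have h2 : q^(2^(n+1)) ≤ (F.card : ℝ) * Real.sqrt C / E := by
      have hb := bound n
      set N := 2^(n+1) with hN
      have hN1 : 1 ≤ N := Nat.one_le_two_pow
      have hEN : E^N = E^(N-1) * E := by
        rw [← pow_succ]
        congr 1
        omega
      have hqN : q^N = ‖S‖^N / E^N := by rw [hq, div_pow]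
      rw [hqN, div_le_div_iff₀ (pow_pos hEpos N) hEpos]
      calc ‖S‖^N * E ≤ ((F.card:ℝ) * (Real.sqrt C * E^(N-1))) * E :=
            mul_le_mul_of_nonneg_right hb hEpos.le
        _ = (F.card:ℝ) * Real.sqrt C * E^N := by rw [hEN]; ring
    linarith
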